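/- Let V, U ⊆ ℝ^d be linear subspaces with dim V = r_1, dim U = r_2, r_1 ≤ r_2, and k := dim(V ∩ U) < r_1. Then there exist a subspace V' ⊆ U with dim V' = r_1 and a family of invertible linear maps g(t) ∈ GL(d, ℝ) for t ≠ 0 such that g(t)(U) = U for all t ≠ 0, and the orthogonal projectors onto g(t)(V) converge, as t → 0, to the orthogonal projector onto V'. In particular the closure of the GL(d,ℝ)-orbit of (V,U) contains a flag-compatible pair (V', U) with V' ⊆ U. -/

import Mathlib

set_option maxHeartbeats 1000000
set_option synthInstance.maxHeartbeats 400000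


/-- `P` is the orthogonal projector (symmetric idempotent matrix) onto the
subspace `V ⊆ ℝ^d`, i.e. its column space is `V`. -/
def IsOrthProj {d : ℕ} (P : Matrix (Fin d) (Fin d) ℝ)
    (V : Submodule ℝ (Fin d → ℝ)) : Prop :=
  P.IsSymm ∧ P * P = P ∧ LinearMap.range P.mulVecLin = V


open Matrix Set Submodule


lemma gram_isUnit {d : ℕ} {ι : Type*} [Fintype ι] [DecidableEq ι]
    (A : Matrix (Fin d) ι ℝ) (hA : LinearIndependent ℝ (fun j => Aᵀ j)) :
    IsUnit (Aᵀ * A).det := by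
  rw [isUnit_iff_ne_zero]
  intro h0
  obtain ⟨v, hv, hmv⟩ := (Matrix.exists_mulVec_eq_zero_iff).2 h0
  have h1 : v ⬝ᵥ ((Aᵀ * A) *ᵥ v) = 0 := by rw [hmv, dotProduct_zero]
  rw [← Matrix.mulVec_mulVec, Matrix.dotProduct_mulVec, Matrix.vecMul_transpose] at h1
  have h2 : A *ᵥ v = 0 := dotProduct_self_eq_zero.mp h1
  exact hv (Matrix.mulVec_injective_iff.mpr hA (by simpa using h2))

lemma proj_isOrthProj {d : ℕ} {ι : Type*} [Fintype ι] [DecidableEq ι]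
    (A : Matrix (Fin d) ι ℝ) (hA : LinearIndependent ℝ (fun j => Aᵀ j)) :
    IsOrthProj (A * (Aᵀ * A)⁻¹ * Aᵀ) (span ℝ (range Aᵀ)) := by
  have hG : IsUnit (Aᵀ * A).det := gram_isUnit A hA
  have hPA : (A * (Aᵀ * A)⁻¹ * Aᵀ) * A = A := by
    rw [Matrix.mul_assoc (A * (Aᵀ * A)⁻¹),
      Matrix.nonsing_inv_mul_cancel_right _ _ hG]
  refine ⟨?_, ?_, ?_⟩
  · show _ᵀ = _
    rw [Matrix.transpose_mul, Matrix.transpose_mul, Matrix.transpose_transpose,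
      Matrix.transpose_nonsing_inv, Matrix.transpose_mul, Matrix.transpose_transpose,
      Matrix.mul_assoc]
  · calc A * (Aᵀ * A)⁻¹ * Aᵀ * (A * (Aᵀ * A)⁻¹ * Aᵀ)
        = (A * (Aᵀ * A)⁻¹ * Aᵀ * A) * ((Aᵀ * A)⁻¹ * Aᵀ) := by
          simp only [Matrix.mul_assoc]
      _ = A * (Aᵀ * A)⁻¹ * Aᵀ := by rw [hPA, Matrix.mul_assoc]
  · change _ = span ℝ (range A.col)
    rw [← Matrix.range_mulVecLin A]
    apply le_antisymm
    · rw [Matrix.mul_assoc, Matrix.mulVecLin_mul]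
      exact LinearMap.range_comp_le_range _ _
    · conv_lhs => rw [← hPA]
      rw [Matrix.mulVecLin_mul]
      exact LinearMap.range_comp_le_range _ _

lemma span_range_coe_basis {K M : Type*} [Field K] [AddCommGroup M] [Module K M] {ι : Type*}
    (p : Submodule K M) (b : Module.Basis ι K p) :
    span K (range fun i => (b i : M)) = p := by
  have h : (range fun i => (b i : M)) = p.subtype '' (range b) := by
    rw [← Set.range_comp]; rfl
  rw [h, Submodule.span_image, b.span_eq, Submodule.map_subtype_top]

lemma exists_compl_family {K M : Type*} [Field K] [AddCommGroup M] [Module K M]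
    [FiniteDimensional K M] {n : ℕ} (W V : Submodule K M) (hWV : W ≤ V)
    (hn : Module.finrank K ↥V = Module.finrank K ↥W + n) :
    ∃ x : Fin n → M, (∀ i, x i ∈ V) ∧ LinearIndependent K x ∧
      Disjoint W (span K (range x)) ∧ W ⊔ span K (range x) = V := by
  obtain ⟨Xv, hXv⟩ := Submodule.exists_isCompl (Submodule.comap V.subtype W)
  have hrank : Module.finrank K Xv = n := by
    have h1 := Submodule.finrank_add_eq_of_isCompl hXv
    have h2 : Module.finrank K (Submodule.comap V.subtype W) = Module.finrank K W :=
      (Submodule.comapSubtypeEquivOfLe hWV).finrank_eq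
    omega
  let bX := Module.finBasisOfFinrankEq K Xv hrank
  have hspan : span K (range fun i => ((bX i : ↥V) : M)) = Submodule.map V.subtype Xv := by
    have h1 : span K (range fun i => ((bX i : Xv) : ↥V)) = Xv := span_range_coe_basis Xv bX
    have h2 : (range fun i => ((bX i : ↥V) : M)) = V.subtype '' (range fun i => (bX i : ↥V)) := by
      rw [← Set.range_comp]; rfl
    rw [h2, Submodule.span_image, h1]
  refine ⟨fun i => ((bX i : ↥V) : M), fun i => (bX i : ↥V).2, ?_, ?_, ?_⟩
  · exact bX.linearIndependent.map' (V.subtype ∘ₗ Xv.subtype)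
      (LinearMap.ker_eq_bot.mpr (by
        rw [LinearMap.coe_comp]
        exact Subtype.val_injective.comp Subtype.val_injective))
  · rw [hspan, Submodule.disjoint_def]
    intro a haW haX
    obtain ⟨b, hb, rfl⟩ := haX
    have hbW : b ∈ Submodule.comap V.subtype W := haW
    have : b = 0 := Submodule.disjoint_def.mp hXv.disjoint b hbW hb
    rw [this]; rfl
  · rw [hspan]
    have h1 : Submodule.map V.subtype (Submodule.comap V.subtype W) ⊔
        Submodule.map V.subtype Xv = Submodule.map V.subtype ⊤ := by
      rw [← Submodule.map_sup, hXv.sup_eq_top]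
    rw [Submodule.map_comap_subtype, Submodule.map_subtype_top,
      inf_eq_right.mpr hWV] at h1
    exact h1

lemma exists_partial_family {K M : Type*} [Field K] [AddCommGroup M] [Module K M]
    [FiniteDimensional K M] {n : ℕ} (W U : Submodule K M) (hWU : W ≤ U)
    (hn : Module.finrank K ↥W + n ≤ Module.finrank K ↥U) :
    ∃ y : Fin n → M, (∀ i, y i ∈ U) ∧ LinearIndependent K y ∧
      Disjoint W (span K (range y)) := by
  obtain ⟨x, hmem, hli, hdisj, -⟩ := exists_compl_family W U hWU
    (hn := (by omega : Module.finrank K ↥U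
      = Module.finrank K ↥W + (Module.finrank K ↥U - Module.finrank K ↥W)))
  refine ⟨fun i => x (Fin.castLE (by omega) i), fun i => hmem _,
    hli.comp _ (Fin.castLE_injective (by omega)), hdisj.mono_right (span_mono ?_)⟩
  rintro - ⟨i, rfl⟩
  exact mem_range_self _


/-- **One-parameter degeneration onto the flag locus (Hilbert–Mumford step).**
If `dim(V ∩ U) < dim V = r₁ ≤ dim U = r₂`, then there are a subspace `V' ⊆ U` of
dimension `r₁` and invertible maps `g t` (for `t ≠ 0`) fixing `U` such that the
orthogonal projectors onto `g t (V)` converge, as `t → 0`, to the orthogonal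
projector onto `V'`; thus the closure of the orbit of `(V, U)` contains the
flag-compatible pair `(V', U)`. -/
theorem stmt8 {d r1 r2 : ℕ} (h12 : r1 ≤ r2) (h2d : r2 ≤ d)
    (V U : Submodule ℝ (Fin d → ℝ))
    (hV : Module.finrank ℝ V = r1) (hU : Module.finrank ℝ U = r2)
    (hk : Module.finrank ℝ ↥(V ⊓ U) < r1) :
    ∃ V' : Submodule ℝ (Fin d → ℝ), V' ≤ U ∧ Module.finrank ℝ V' = r1 ∧
    ∃ g : ℝ → ((Fin d → ℝ) ≃ₗ[ℝ] (Fin d → ℝ)),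
    ∃ P : ℝ → Matrix (Fin d) (Fin d) ℝ, ∃ P' : Matrix (Fin d) (Fin d) ℝ,
      (∀ t : ℝ, t ≠ 0 →
        U.map ((g t : (Fin d → ℝ) →ₗ[ℝ] (Fin d → ℝ))) = U) ∧
      (∀ t : ℝ, t ≠ 0 →
        IsOrthProj (P t) (V.map ((g t : (Fin d → ℝ) →ₗ[ℝ] (Fin d → ℝ))))) ∧
      IsOrthProj P' V' ∧
      Filter.Tendsto P (nhdsWithin 0 {(0 : ℝ)}ᶜ) (nhds P') := by
  classical
  set k : ℕ := Module.finrank ℝ ↥(V ⊓ U) with hkdef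
  have hkr : k ≤ r1 := hk.le
  -- basis of V ⊓ U
  let bW : Module.Basis (Fin k) ℝ ↥(V ⊓ U) := Module.finBasis ℝ ↥(V ⊓ U)
  let w : Fin k → (Fin d → ℝ) := fun j => (bW j : Fin d → ℝ)
  have hw_li : LinearIndependent ℝ w :=
    bW.linearIndependent.map' (V ⊓ U).subtype (Submodule.ker_subtype _)
  have hw_span : span ℝ (range w) = V ⊓ U := span_range_coe_basis _ bW
  have hw_memU : ∀ j, w j ∈ U := fun j => (Submodule.mem_inf.mp (bW j).2).2
  have hw_memV : ∀ j, w j ∈ V := fun j => (Submodule.mem_inf.mp (bW j).2).1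
  -- complement family inside V and partial family inside U
  obtain ⟨x, hx_memV, hx_li, hdisjWX, hsupX⟩ :=
    exists_compl_family (V ⊓ U) V inf_le_left
      (n := r1 - k) (by rw [hV, ← hkdef]; omega)
  obtain ⟨y, hy_memU, hy_li, hdisjWY⟩ :=
    exists_partial_family (V ⊓ U) U inf_le_right
      (n := r1 - k) (by rw [hU, ← hkdef]; omega)
  have hwy_li : LinearIndependent ℝ (Sum.elim w y) :=
    hw_li.sum_type hy_li (by rw [hw_span]; exact hdisjWY)
  have hwx_li : LinearIndependent ℝ (Sum.elim w x) :=
    hw_li.sum_type hx_li (by rw [hw_span]; exact hdisjWX)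
  set V' : Submodule ℝ (Fin d → ℝ) := span ℝ (range (Sum.elim w y)) with hV'def
  have hV'U : V' ≤ U := by
    rw [hV'def, Submodule.span_le]
    rintro - ⟨j, rfl⟩
    cases j with
    | inl j => exact hw_memU j
    | inr i => exact hy_memU i
  have hV'rank : Module.finrank ℝ V' = r1 := by
    rw [hV'def, finrank_span_eq_card hwy_li]
    simp only [Fintype.card_sum, Fintype.card_fin]
    omega
  have hVspan : span ℝ (range (Sum.elim w x)) = V := by
    rw [Set.Sum.elim_range, Submodule.span_union, hw_span]
    exact hsupX
  -- the subspace X and a complement containing U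
  set Xs : Submodule ℝ (Fin d → ℝ) := span ℝ (range x) with hXsdef
  have hXsV : Xs ≤ V := by
    rw [hXsdef, Submodule.span_le]
    rintro - ⟨i, rfl⟩
    exact hx_memV i
  have hUXs : ∀ a ∈ U, a ∈ Xs → a = 0 := fun a haU haX =>
    Submodule.disjoint_def.mp hdisjWX a ⟨hXsV haX, haU⟩ haX
  obtain ⟨C₀, hC₀⟩ := Submodule.exists_isCompl (Xs ⊔ U)
  have hXC : IsCompl Xs (U ⊔ C₀) := by
    constructor
    · rw [disjoint_def]
      intro a haX haC
      rw [Submodule.mem_sup] at haC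
      obtain ⟨u, hu, c, hc, rfl⟩ := haC
      have hc2 : c ∈ Xs ⊔ U := by
        have hce : c = (u + c) - u := by abel
        rw [hce]
        exact sub_mem ((le_sup_left : Xs ≤ Xs ⊔ U) haX) ((le_sup_right : U ≤ Xs ⊔ U) hu)
      have hc0 : c = 0 := Submodule.disjoint_def.mp hC₀.disjoint c hc2 hc
      rw [hc0, add_zero]
      exact hUXs u hu (by rw [hc0, add_zero] at haX; exact haX)
    · rw [codisjoint_iff, ← sup_assoc]
      exact codisjoint_iff.mp hC₀.codisjoint
  let pr : (Fin d → ℝ) →ₗ[ℝ] Xs := Xs.linearProjOfIsCompl (U ⊔ C₀) hXC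
  let p : (Fin d → ℝ) →ₗ[ℝ] (Fin d → ℝ) := Xs.subtype ∘ₗ pr
  let bXs : Module.Basis (Fin (r1 - k)) ℝ Xs := Module.Basis.span hx_li
  let q : (Fin d → ℝ) →ₗ[ℝ] (Fin d → ℝ) := (bXs.constr ℝ y) ∘ₗ pr
  have hp_left : ∀ (v : Fin d → ℝ) (hv : v ∈ Xs), p v = v := fun v hv =>
    congrArg Subtype.val (Submodule.linearProjOfIsCompl_apply_left hXC ⟨v, hv⟩)
  have hpr_U : ∀ v ∈ U, pr v = 0 := fun v hv =>
    Submodule.linearProjOfIsCompl_apply_right' hXC ((le_sup_left : U ≤ U ⊔ C₀) hv)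
  have hp_U : ∀ v ∈ U, p v = 0 := fun v hv => by
    show Xs.subtype (pr v) = 0
    rw [hpr_U v hv, map_zero]
  have hq_U : ∀ v ∈ U, q v = 0 := fun v hv => by
    show (bXs.constr ℝ y) (pr v) = 0
    rw [hpr_U v hv, map_zero]
  have hq_mem : ∀ v, q v ∈ U := by
    intro v
    show (bXs.constr ℝ y) (pr v) ∈ U
    rw [Module.Basis.constr_apply_fintype]
    exact Submodule.sum_mem _ fun i _ => Submodule.smul_mem _ _ (hy_memU i)
  have hp_mem : ∀ v, p v ∈ Xs := fun v => (pr v).2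
  have hp_idem : ∀ v, p (p v) = p v := fun v => hp_left _ (hp_mem v)
  have hpq : ∀ v, p (q v) = 0 := fun v => hp_U _ (hq_mem v)
  have hqq : ∀ v, q (q v) = 0 := fun v => hq_U _ (hq_mem v)
  have hpr_p : ∀ v, pr (p v) = pr v := fun v =>
    Submodule.linearProjOfIsCompl_apply_left hXC (pr v)
  have hqp : ∀ v, q (p v) = q v := fun v => by
    show (bXs.constr ℝ y) (pr (p v)) = (bXs.constr ℝ y) (pr v)
    rw [hpr_p]
  have hx_memXs : ∀ i, x i ∈ Xs := fun i => subset_span (mem_range_self i)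
  have hp_x : ∀ i, p (x i) = x i := fun i => hp_left _ (hx_memXs i)
  have hq_x : ∀ i, q (x i) = y i := by
    intro i
    have h1 : pr (x i) = bXs i := by
      apply Subtype.ext
      have h2 := Submodule.linearProjOfIsCompl_apply_left hXC ⟨x i, hx_memXs i⟩
      rw [show ((⟨x i, hx_memXs i⟩ : Xs) : Fin d → ℝ) = x i from rfl] at h2
      rw [show pr (x i) = ⟨x i, hx_memXs i⟩ from h2, Module.Basis.span_apply]
    show (bXs.constr ℝ y) (pr (x i)) = y i
    rw [h1, Module.Basis.constr_basis]
  -- the one-parameter family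
  let Glin : ℝ → ((Fin d → ℝ) →ₗ[ℝ] (Fin d → ℝ)) := fun t => LinearMap.id + (t - 1) • p + q
  let Hlin : ℝ → ((Fin d → ℝ) →ₗ[ℝ] (Fin d → ℝ)) := fun t =>
    LinearMap.id + (t⁻¹ - 1) • p - t⁻¹ • q
  have hGapp : ∀ t v, Glin t v = v + (t - 1) • p v + q v := fun t v => rfl
  have hHapp : ∀ t v, Hlin t v = v + (t⁻¹ - 1) • p v - t⁻¹ • q v := fun t v => rfl
  have hHG : ∀ t : ℝ, t ≠ 0 → (Hlin t).comp (Glin t) = LinearMap.id := by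
    intro t ht
    apply LinearMap.ext
    intro v
    rw [LinearMap.comp_apply, hGapp, hHapp, LinearMap.id_apply]
    simp only [map_add, _root_.map_smul, hp_idem, hpq, hqp, hqq, smul_zero, add_zero]
    match_scalars <;> field_simp <;> ring
  have hGH : ∀ t : ℝ, t ≠ 0 → (Glin t).comp (Hlin t) = LinearMap.id := by
    intro t ht
    apply LinearMap.ext
    intro v
    rw [LinearMap.comp_apply, hHapp, hGapp, LinearMap.id_apply]
    simp only [map_add, map_sub, _root_.map_smul, hp_idem, hpq, hqp, hqq, smul_zero, add_zero,
      sub_zero]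
    match_scalars <;> field_simp <;> ring
  let g : ℝ → ((Fin d → ℝ) ≃ₗ[ℝ] (Fin d → ℝ)) := fun t =>
    if ht : t = 0 then LinearEquiv.refl ℝ (Fin d → ℝ)
    else LinearEquiv.ofLinear (Glin t) (Hlin t) (hGH t ht) (hHG t ht)
  have hg_lin : ∀ (t : ℝ), t ≠ 0 →
      ((g t : (Fin d → ℝ) ≃ₗ[ℝ] (Fin d → ℝ)) : (Fin d → ℝ) →ₗ[ℝ] (Fin d → ℝ)) = Glin t := by
    intro t ht
    simp only [g, dif_neg ht]
    rfl
  have hG_U : ∀ (t : ℝ), ∀ v ∈ U, Glin t v = v := by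
    intro t v hv
    rw [hGapp, hp_U v hv, hq_U v hv, smul_zero, add_zero, add_zero]
  have hG_x : ∀ (t : ℝ) i, Glin t (x i) = y i + t • x i := by
    intro t i
    rw [hGapp, hp_x, hq_x]
    match_scalars <;> ring
  -- the projector family
  let cvec : ℝ → (Fin k ⊕ Fin (r1 - k)) → (Fin d → ℝ) := fun t =>
    Sum.elim w (fun i => y i + t • x i)
  let Afun : ℝ → Matrix (Fin d) (Fin k ⊕ Fin (r1 - k)) ℝ := fun t =>
    Matrix.of fun i j => cvec t j i
  have hAT : ∀ t, (Afun t)ᵀ = fun j => cvec t j := fun t => rfl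
  have hcvec0 : cvec 0 = Sum.elim w y := by
    funext j
    cases j with
    | inl j => rfl
    | inr i => show y i + (0 : ℝ) • x i = y i; rw [zero_smul, add_zero]
  have hcomp : ∀ (t : ℝ), t ≠ 0 → cvec t =
      ((g t : (Fin d → ℝ) ≃ₗ[ℝ] (Fin d → ℝ)) : (Fin d → ℝ) →ₗ[ℝ] (Fin d → ℝ)) ∘ Sum.elim w x := by
    intro t ht
    funext j
    rw [hg_lin t ht]
    cases j with
    | inl j => exact (hG_U t (w j) (hw_memU j)).symm
    | inr i => exact (hG_x t i).symm
  have hli0 : LinearIndependent ℝ fun j => (Afun 0)ᵀ j := by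
    rw [hAT, hcvec0]; exact hwy_li
  have hlit : ∀ (t : ℝ), t ≠ 0 → LinearIndependent ℝ fun j => (Afun t)ᵀ j := by
    intro t ht
    rw [hAT, hcomp t ht]
    exact hwx_li.map' _ (LinearEquiv.ker _)
  have hspan0 : span ℝ (range fun j => (Afun 0)ᵀ j) = V' := by
    rw [hAT, hcvec0, hV'def]
  have hspant : ∀ (t : ℝ), t ≠ 0 → span ℝ (range fun j => (Afun t)ᵀ j) =
      V.map ((g t : (Fin d → ℝ) ≃ₗ[ℝ] (Fin d → ℝ)) : (Fin d → ℝ) →ₗ[ℝ] (Fin d → ℝ)) := by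
    intro t ht
    rw [hAT, hcomp t ht, Set.range_comp, Submodule.span_image, hVspan]
  let Pfun : ℝ → Matrix (Fin d) (Fin d) ℝ := fun t => Afun t * ((Afun t)ᵀ * Afun t)⁻¹ * (Afun t)ᵀ
  -- continuity
  have hAcont : Continuous Afun := by
    apply continuous_matrix
    intro i j
    cases j with
    | inl j => exact continuous_const
    | inr i' =>
      show Continuous fun t : ℝ => (y i' + t • x i') i
      have : (fun t : ℝ => (y i' + t • x i') i) = fun t : ℝ => y i' i + t * x i' i := rfl
      rw [this]
      exact continuous_const.add (continuous_id.mul continuous_const)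
  have hGramcont : Continuous fun t => (Afun t)ᵀ * Afun t :=
    hAcont.matrix_transpose.matrix_mul hAcont
  have hdet0 : ((Afun 0)ᵀ * Afun 0).det ≠ 0 := by
    have := gram_isUnit (Afun 0) hli0
    exact isUnit_iff_ne_zero.mp this
  have hinvcont : ContinuousAt (fun t => ((Afun t)ᵀ * Afun t)⁻¹) 0 := by
    have heq : (fun t => ((Afun t)ᵀ * Afun t)⁻¹) =
        fun t => (((Afun t)ᵀ * Afun t).det)⁻¹ • ((Afun t)ᵀ * Afun t).adjugate := by
      funext t
      rw [Matrix.inv_def, Ring.inverse_eq_inv']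
    rw [heq]
    exact ((hGramcont.matrix_det.continuousAt).inv₀ hdet0).smul
      (hGramcont.matrix_adjugate.continuousAt)
  have hPcont : ContinuousAt Pfun 0 := by
    have h1 : ContinuousAt (fun t => Afun t * ((Afun t)ᵀ * Afun t)⁻¹) 0 :=
      (continuous_fst.matrix_mul continuous_snd).continuousAt.comp
        (hAcont.continuousAt.prodMk hinvcont)
    exact (continuous_fst.matrix_mul continuous_snd).continuousAt.comp
      (h1.prodMk hAcont.matrix_transpose.continuousAt)
  -- assemble
  refine ⟨V', hV'U, hV'rank, g, Pfun, Pfun 0, ?_, ?_, ?_, ?_⟩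
  · intro t ht
    apply le_antisymm
    · rintro - ⟨u, hu, rfl⟩
      rw [hg_lin t ht]
      show Glin t u ∈ U
      rw [hG_U t u hu]
      exact hu
    · intro u hu
      refine ⟨u, hu, ?_⟩
      rw [hg_lin t ht]
      exact hG_U t u hu
  · intro t ht
    have h := proj_isOrthProj (Afun t) (hlit t ht)
    rwa [hspant t ht] at h
  · have h := proj_isOrthProj (Afun 0) hli0
    rwa [hspan0] at h
  · exact (hPcont.tendsto).mono_left nhdsWithin_le_nhds
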